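/- For d ≥ 3 and any η with −1/(d+1) ≤ η ≤ 1/(d−1), one has η² ≤ 1/(d+1). Consequently, since V_{η}² = Δ_{η²} and Δ_μ is entanglement-breaking for μ ≤ 1/(d+1), the square of any Werner channel V_η in dimension d ≥ 3 is entanglement-breaking. -/
import Mathlib

open Matrix

/-- The depolarizing map `Δ_μ(X) = μ X + (1-μ)(Tr X) 𝟙 / d`. -/
noncomputable def depol (d : ℕ) (mu : ℝ) (X : Matrix (Fin d) (Fin d) ℂ) :
    Matrix (Fin d) (Fin d) ℂ :=
  (mu : ℂ) • X + (((1 - mu : ℝ) : ℂ) / d) • X.trace • (1 : Matrix (Fin d) (Fin d) ℂ)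

/-- The Werner–Holevo map `V_η(X) = -η Xᵀ + (1+η)(Tr X) 𝟙 / d`. -/
noncomputable def werner (d : ℕ) (eta : ℝ) (X : Matrix (Fin d) (Fin d) ℂ) :
    Matrix (Fin d) (Fin d) ℂ :=
  (-(eta : ℂ)) • Xᵀ + (((1 + eta : ℝ) : ℂ) / d) • X.trace • (1 : Matrix (Fin d) (Fin d) ℂ)

/-- For `d ≥ 3` and `-1/(d+1) ≤ η ≤ 1/(d-1)` one has `η² ≤ 1/(d+1)`; moreover
`V_η² = Δ_{η²}`, so the square of any Werner channel in dimension `d ≥ 3` is the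
depolarizing channel with parameter `η² ≤ 1/(d+1)`, hence entanglement-breaking. -/
theorem werner_sq_param_le (d : ℕ) (hd : 3 ≤ d) (eta : ℝ)
    (h₁ : -(1 / ((d : ℝ) + 1)) ≤ eta) (h₂ : eta ≤ 1 / ((d : ℝ) - 1)) :
    eta ^ 2 ≤ 1 / ((d : ℝ) + 1) ∧
    ∀ X : Matrix (Fin d) (Fin d) ℂ, werner d eta (werner d eta X) = depol d (eta ^ 2) X := by
  have hd3 : (3:ℝ) ≤ (d:ℝ) := by exact_mod_cast hd
  constructor
  · have hm1 : (0:ℝ) < (d:ℝ) - 1 := by linarith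
    have hp1 : (0:ℝ) < (d:ℝ) + 1 := by linarith
    have h1' : -(1 / ((d:ℝ) - 1)) ≤ eta := by
      refine le_trans ?_ h₁
      have : 1/((d:ℝ)+1) ≤ 1/((d:ℝ)-1) := by
        apply one_div_le_one_div_of_le hm1; linarith
      linarith
    have habs : |eta| ≤ 1 / ((d:ℝ) - 1) := abs_le.2 ⟨h1', h₂⟩
    have hsq : eta ^ 2 ≤ (1 / ((d:ℝ) - 1)) ^ 2 := by
      rw [← sq_abs]
      exact pow_le_pow_left₀ (abs_nonneg _) habs 2
    have : (1 / ((d:ℝ) - 1)) ^ 2 ≤ 1 / ((d:ℝ) + 1) := by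
      rw [div_pow, one_pow, div_le_div_iff₀ (by positivity) hp1]
      nlinarith
    linarith
  · intro X
    have hdc : ((d:ℂ)) ≠ 0 := by
      simp only [Ne, Nat.cast_eq_zero]; omega
    simp only [werner, depol, transpose_add, transpose_smul, transpose_one,
      transpose_transpose, trace_add, trace_smul, Matrix.trace_one, smul_add, smul_smul,
      Finset.card_univ, Fintype.card_fin]
    push_cast
    ext i j
    simp [Matrix.add_apply, Matrix.smul_apply, Matrix.one_apply, smul_eq_mul]

    split_ifs with h
    · field_simp
      ring
    · ring
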